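/- arXiv:1404.0407 — 4 statements merged into one kernel-verified Lean document; each statement's English description precedes it below -/
import Mathlib

section
/- Let $k \geq 1$ be a natural number, let $F$ be holomorphic in a neighborhood of the closed unit disc $\overline{\Delta}$ and nonvanishing on $\overline{\Delta} \setminus \{0\}$, and let $G$ be holomorphic on the open unit disc $\Delta$ with $G = o(F)$ as $s \to 0$. If there exists $t \in \Delta \setminus \{0\}$ such that $F(\omega t) = G(\omega t)$ for all $k$-th roots of unity $\omega$, then $\sup_{\Delta} |G| \geq C_1 |t|^{-k}$, where $C_1 = \min_{|s|=1} |F(s)| > 0$. -/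
open Metric Filter
open Topology NNReal ENNReal

/-- Root-of-unity lemma (Proposition 2.2): if `F` is holomorphic near the closed unit
disc, nonvanishing off `0`, `G` is holomorphic on the unit disc with `G = o(F)` at `0`,
and `F` and `G` agree at the points `ω t` for all `k`-th roots of unity `ω`, then
`sup_Δ |G| ≥ C₁ |t|⁻ᵏ` where `C₁ = min_{|s|=1} |F s| > 0`. -/
theorem stmt0 (k : ℕ) (hk : 1 ≤ k) (F G : ℂ → ℂ)
    (hF : ∃ U : Set ℂ, IsOpen U ∧ closedBall (0 : ℂ) 1 ⊆ U ∧ DifferentiableOn ℂ F U)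
    (hFne : ∀ s ∈ closedBall (0 : ℂ) 1, s ≠ 0 → F s ≠ 0)
    (hG : DifferentiableOn ℂ G (ball (0 : ℂ) 1))
    (hlittle : G =o[nhdsWithin (0 : ℂ) {0}ᶜ] F)
    (t : ℂ) (ht : t ∈ ball (0 : ℂ) 1) (ht0 : t ≠ 0)
    (hagree : ∀ ω : ℂ, ω ^ k = 1 → F (ω * t) = G (ω * t))
    (C₁ : ℝ) (hC₁ : C₁ = sInf {x : ℝ | ∃ s : ℂ, ‖s‖ = 1 ∧ x = ‖F s‖}) :
    0 < C₁ ∧ ∀ M : ℝ, (∀ s ∈ ball (0 : ℂ) 1, ‖G s‖ ≤ M) → C₁ / ‖t‖ ^ k ≤ M := by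
  obtain ⟨U, hUo, hUsub, hFd⟩ := hF
  have hk0 : k ≠ 0 := by omega
  have hkC : (k : ℂ) ≠ 0 := Nat.cast_ne_zero.mpr hk0
  have hFc : ContinuousOn F (closedBall 0 1) := hFd.continuousOn.mono hUsub
  -- the set defining C₁ is the image of the unit sphere
  have himg : {x : ℝ | ∃ s : ℂ, ‖s‖ = 1 ∧ x = ‖F s‖}
      = (fun s : ℂ => ‖F s‖) '' sphere (0 : ℂ) 1 := by
    ext x
    constructor
    · rintro ⟨s, hs, rfl⟩
      exact ⟨s, mem_sphere_zero_iff_norm.mpr hs, rfl⟩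
    · rintro ⟨s, hs, h⟩
      exact ⟨s, mem_sphere_zero_iff_norm.mp hs, h.symm⟩
  have hC₁mem : C₁ ∈ (fun s : ℂ => ‖F s‖) '' sphere (0 : ℂ) 1 := by
    rw [hC₁, himg]
    exact ((isCompact_sphere (0 : ℂ) 1).image_of_continuousOn
      ((hFc.mono sphere_subset_closedBall).norm)).sInf_mem
      (Set.Nonempty.image _ ⟨1, by simp [mem_sphere_zero_iff_norm]⟩)
  obtain ⟨s₀, hs₀, hCval⟩ := hC₁mem
  have hs₀1 : ‖s₀‖ = 1 := mem_sphere_zero_iff_norm.mp hs₀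
  have hC₁pos : 0 < C₁ := by
    rw [← hCval]
    refine norm_pos_iff.mpr (hFne s₀ (sphere_subset_closedBall hs₀) ?_)
    intro h
    rw [h] at hs₀1
    simp at hs₀1
  refine ⟨hC₁pos, fun M hM => ?_⟩
  have ht1 : ‖t‖ < 1 := mem_ball_zero_iff.mp ht
  have htpos : (0 : ℝ) < ‖t‖ := norm_pos_iff.mpr ht0
  have hMnn : (0 : ℝ) ≤ M := le_trans (norm_nonneg _) (hM 0 (by simp))
  have hC₁le : ∀ z : ℂ, ‖z‖ = 1 → C₁ ≤ ‖F z‖ := by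
    intro z hz
    rw [hC₁]
    exact csInf_le ⟨0, by rintro x ⟨s, _, rfl⟩; exact norm_nonneg _⟩ ⟨z, hz, rfl⟩
  -- the quotient function φ = G / F, extended by 0 at the origin
  set f : ℂ → ℂ := fun z => G z / F z with hfdef
  have htend : Tendsto f (𝓝[≠] (0 : ℂ)) (𝓝 0) := hlittle.tendsto_div_nhds_zero
  set φ : ℂ → ℂ := Function.update f 0 (limUnder (𝓝[≠] (0 : ℂ)) f) with hφdef
  have hφ0 : φ 0 = 0 := by
    rw [hφdef, Function.update_self]
    exact htend.limUnder_eq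
  have hφne : ∀ z : ℂ, z ≠ 0 → φ z = G z / F z := fun z hz => Function.update_of_ne hz _ _
  have hfd : DifferentiableOn ℂ f (ball (0 : ℂ) 1 \ {0}) := by
    refine DifferentiableOn.div (hG.mono Set.diff_subset)
      (hFd.mono fun z hz => hUsub (ball_subset_closedBall (Set.diff_subset hz))) ?_
    intro z hz
    exact hFne z (ball_subset_closedBall hz.1) (by simpa using hz.2)
  have hφd : DifferentiableOn ℂ φ (ball (0 : ℂ) 1) := by
    refine Complex.differentiableOn_update_limUnder_of_isLittleO
      (ball_mem_nhds 0 one_pos) hfd ?_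
    have h1 : Tendsto (fun z : ℂ => (f z - f 0) * z) (𝓝[≠] (0 : ℂ)) (𝓝 0) := by
      have := (htend.sub_const (f 0)).mul
        ((continuous_id.tendsto (0 : ℂ)).mono_left nhdsWithin_le_nhds)
      simpa using this
    rw [Asymptotics.isLittleO_iff_tendsto']
    · simpa [sub_zero, div_eq_mul_inv, inv_inv] using h1
    · filter_upwards [self_mem_nhdsWithin] with z hz h0
      exact absurd (inv_eq_zero.mp (by simpa using h0)) hz
  -- bound ‖φ‖ ≤ M / C₁ on the open unit ball, via the maximum principle
  have hφB : ∀ s ∈ ball (0 : ℂ) 1, ‖φ s‖ * C₁ ≤ M := by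
    intro s hs
    have hs1 : ‖s‖ < 1 := mem_ball_zero_iff.mp hs
    have key : ∀ ε : ℝ, 0 < ε → ε < C₁ → ‖φ s‖ * (C₁ - ε) ≤ M := by
      intro ε hε hεC
      have hCε : (0 : ℝ) < C₁ - ε := by linarith
      set V : Set ℂ := U ∩ (fun z => ‖F z‖) ⁻¹' Set.Ioi (C₁ - ε) with hV
      have hVopen : IsOpen V := hFd.continuousOn.norm.isOpen_inter_preimage hUo isOpen_Ioi
      have hsphV : ∀ z : ℂ, ‖z‖ = 1 → z ∈ V := by
        intro z hz
        refine ⟨hUsub (by rw [mem_closedBall_zero_iff, hz]), ?_⟩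
        simp only [Set.mem_preimage, Set.mem_Ioi]
        linarith [hC₁le z hz]
      set K : Set ℂ := closedBall (0 : ℂ) 1 \ V with hK
      have hKc : IsCompact K := (isCompact_closedBall _ _).diff hVopen
      have hKlt : ∀ z ∈ K, ‖z‖ < 1 := by
        intro z hz
        rcases lt_or_eq_of_le (mem_closedBall_zero_iff.mp hz.1) with h | h
        · exact h
        · exact absurd (hsphV z h) hz.2
      obtain ⟨ρ, hρ0, hρ1, hρK⟩ : ∃ ρ : ℝ, 0 ≤ ρ ∧ ρ < 1 ∧ ∀ z ∈ K, ‖z‖ ≤ ρ := by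
        rcases K.eq_empty_or_nonempty with hKe | hKne
        · exact ⟨0, le_refl _, one_pos, by simp [hKe]⟩
        · obtain ⟨z₀, hz₀K, hz₀max⟩ := hKc.exists_isMaxOn hKne continuous_norm.continuousOn
          exact ⟨‖z₀‖, norm_nonneg _, hKlt z₀ hz₀K, fun z hz => hz₀max hz⟩
      set r : ℝ := (max ρ ‖s‖ + 1) / 2 with hr
      have hmax1 : max ρ ‖s‖ < 1 := max_lt hρ1 hs1
      have hmax0 : 0 ≤ max ρ ‖s‖ := le_trans hρ0 (le_max_left _ _)
      have hr0 : 0 < r := by rw [hr]; linarith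
      have hrs : ‖s‖ < r := by
        have := le_max_right ρ ‖s‖
        rw [hr]; linarith
      have hr1 : r < 1 := by rw [hr]; linarith
      have hrV : ∀ z : ℂ, ‖z‖ = r → z ∈ V := by
        intro z hz
        by_contra hzV
        have hzK : z ∈ K := ⟨mem_closedBall_zero_iff.mpr (by rw [hz]; linarith), hzV⟩
        have h1 := hρK z hzK
        have h2 := le_max_left ρ ‖s‖
        rw [hz, hr] at h1
        linarith
      have hsub : closure (ball (0 : ℂ) r) ⊆ ball (0 : ℂ) 1 :=
        closure_ball_subset_closedBall.trans (closedBall_subset_ball hr1)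
      have hdc : DiffContOnCl ℂ φ (ball (0 : ℂ) r) := (hφd.mono hsub).diffContOnCl
      have hfr : ∀ z ∈ frontier (ball (0 : ℂ) r), ‖φ z‖ ≤ M / (C₁ - ε) := by
        intro z hz
        rw [frontier_ball _ (ne_of_gt hr0)] at hz
        have hzr : ‖z‖ = r := mem_sphere_zero_iff_norm.mp hz
        have hz0 : z ≠ 0 := by
          intro h
          rw [h, norm_zero] at hzr
          exact absurd hzr.symm (ne_of_gt hr0)
        have hzb : z ∈ ball (0 : ℂ) 1 := mem_ball_zero_iff.mpr (by rw [hzr]; exact hr1)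
        have hFz : C₁ - ε < ‖F z‖ := (hrV z hzr).2
        rw [hφne z hz0, norm_div]
        exact div_le_div₀ hMnn (hM z hzb) hCε hFz.le
      have hle : ‖φ s‖ ≤ M / (C₁ - ε) :=
        Complex.norm_le_of_forall_mem_frontier_norm_le isBounded_ball hdc hfr
          (subset_closure (mem_ball_zero_iff.mpr hrs))
      exact (le_div_iff₀ hCε).mp hle
    have hlim : Tendsto (fun ε : ℝ => ‖φ s‖ * (C₁ - ε)) (𝓝[>] 0) (𝓝 (‖φ s‖ * C₁)) := by
      have h2 : Tendsto (fun ε : ℝ => ‖φ s‖ * (C₁ - ε)) (𝓝 0) (𝓝 (‖φ s‖ * (C₁ - 0))) :=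
        tendsto_const_nhds.mul (tendsto_const_nhds.sub tendsto_id)
      rw [sub_zero] at h2
      exact h2.mono_left nhdsWithin_le_nhds
    refine le_of_tendsto hlim ?_
    filter_upwards [Ioo_mem_nhdsGT_of_mem ⟨le_refl (0 : ℝ), hC₁pos⟩] with ε hε
    exact key ε hε.1 hε.2
  have hφB' : ∀ s ∈ ball (0 : ℂ) 1, ‖φ s‖ ≤ M / C₁ := fun s hs =>
    (le_div_iff₀ hC₁pos).mpr (hφB s hs)
  -- power series of φ at 0
  obtain ⟨p, hpa⟩ := hφd.analyticAt (ball_mem_nhds 0 one_pos)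
  have hpr : ∀ r : ℝ≥0, 0 < r → (r : ℝ) < 1 → HasFPowerSeriesOnBall φ p 0 r := by
    intro r h0 h1
    have hb := (hφd.mono (closedBall_subset_ball h1)).hasFPowerSeriesOnBall h0
    rwa [hpa.eq_formalMultilinearSeries hb.hasFPowerSeriesAt]
  have hp1 : 1 ≤ p.radius := by
    refine ENNReal.le_of_forall_nnreal_lt fun r hr => ?_
    rcases eq_or_lt_of_le (zero_le : (0 : ℝ≥0) ≤ r) with h0 | h0
    · rw [← h0]; exact zero_le
    · have hr1 : r < 1 := by exact_mod_cast hr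
      exact (hpr r h0 (by exact_mod_cast hr1)).r_le
  have hrep : ∀ y : ℂ, ‖y‖ < 1 → HasSum (fun n => p.coeff n * y ^ n) (φ y) := by
    intro y hy
    have h2 : (0 : ℝ) ≤ (‖y‖ + 1) / 2 := by positivity
    set r : ℝ≥0 := ⟨(‖y‖ + 1) / 2, h2⟩ with hrdef
    have hrc : (r : ℝ) = (‖y‖ + 1) / 2 := rfl
    have h0 : 0 < r := by
      rw [← NNReal.coe_pos, hrc]
      positivity
    have h1 : (r : ℝ) < 1 := by rw [hrc]; linarith
    have hmem : y ∈ Metric.eball (0 : ℂ) r := by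
      rw [Metric.emetric_ball_nnreal, mem_ball_zero_iff, hrc]
      linarith
    have hhs := (hpr r h0 h1).hasSum hmem
    rw [zero_add] at hhs
    have hfun : (fun n => p n fun _ => y) = fun n => p.coeff n * y ^ n := by
      funext n
      rw [p.apply_eq_pow_smul_coeff, smul_eq_mul, mul_comm]
    rwa [hfun] at hhs
  -- the symmetrized series q, with ψ = q.sum
  set q : FormalMultilinearSeries ℂ ℂ ℂ :=
    FormalMultilinearSeries.ofScalars ℂ (fun m => p.coeff (k * m)) with hqdef
  have hqnorm : ∀ n, ‖q n‖ = ‖p.coeff (k * n)‖ := fun n =>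
    FormalMultilinearSeries.ofScalars_norm ℂ (fun m => p.coeff (k * m)) n
  have hcoeff : ∀ n, ‖p.coeff n‖ ≤ ‖p n‖ := by
    intro n
    calc ‖p.coeff n‖ = ‖p n 1‖ := rfl
      _ ≤ ‖p n‖ * ∏ i : Fin n, ‖(1 : Fin n → ℂ) i‖ := (p n).le_opNorm 1
      _ = ‖p n‖ := by simp
  have hq1 : 1 ≤ q.radius := by
    refine ENNReal.le_of_forall_nnreal_lt fun ρ hρ => ?_
    have hρ1 : ρ < 1 := by exact_mod_cast hρ
    set r : ℝ≥0 := ρ ^ ((k : ℝ)⁻¹) with hrdef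
    have hrk : r ^ k = ρ := by
      rw [hrdef, ← NNReal.rpow_natCast (ρ ^ ((k : ℝ)⁻¹)) k, ← NNReal.rpow_mul,
        inv_mul_cancel₀ (by exact_mod_cast hk0 : (k : ℝ) ≠ 0), NNReal.rpow_one]
    have hr1 : r < 1 := by
      by_contra hcon
      push_neg at hcon
      have : (1 : ℝ≥0) ≤ r ^ k := one_le_pow₀ hcon
      rw [hrk] at this
      exact absurd hρ1 (not_lt.mpr this)
    have hrrad : (r : ℝ≥0∞) < p.radius := lt_of_lt_of_le (by exact_mod_cast hr1) hp1
    obtain ⟨C, hC0, hC⟩ := p.norm_mul_pow_le_of_lt_radius hrrad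
    refine q.le_radius_of_bound C fun n => ?_
    have h1 : ‖q n‖ * (ρ : ℝ) ^ n = ‖p.coeff (k * n)‖ * (r : ℝ) ^ (k * n) := by
      rw [hqnorm n, ← hrk, NNReal.coe_pow, ← pow_mul]
    rw [h1]
    exact le_trans (mul_le_mul_of_nonneg_right (hcoeff _) (by positivity)) (hC (k * n))
  set ψ : ℂ → ℂ := q.sum with hψdef
  have hq0 : 0 < q.radius := lt_of_lt_of_le one_pos hq1
  have hqball : HasFPowerSeriesOnBall ψ q 0 1 :=
    (q.hasFPowerSeriesOnBall hq0).mono one_pos hq1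
  have hballeq : Metric.eball (0 : ℂ) 1 = ball (0 : ℂ) 1 := by
    rw [← ENNReal.coe_one, Metric.emetric_ball_nnreal, NNReal.coe_one]
  have hψd : DifferentiableOn ℂ ψ (ball (0 : ℂ) 1) := by
    have := hqball.differentiableOn
    rwa [hballeq] at this
  have hψrep : ∀ z : ℂ, ‖z‖ < 1 → HasSum (fun m => p.coeff (k * m) * z ^ m) (ψ z) := by
    intro z hz
    have hmem : z ∈ Metric.eball (0 : ℂ) 1 := by
      rw [hballeq]
      exact mem_ball_zero_iff.mpr hz
    have hhs := hqball.hasSum hmem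
    rw [zero_add] at hhs
    have hfun : (fun n => q n fun _ => z) = fun m => p.coeff (k * m) * z ^ m := by
      funext m
      rw [hqdef, FormalMultilinearSeries.ofScalars_apply_eq, smul_eq_mul]
    rwa [hfun] at hhs
  -- the primitive k-th root of unity
  set ω : ℂ := Complex.exp (2 * Real.pi * Complex.I / k) with hw
  have hprim : IsPrimitiveRoot ω k := Complex.isPrimitiveRoot_exp k hk0
  have hωk : ω ^ k = 1 := hprim.pow_eq_one
  have hω0 : ω ≠ 0 := fun h => by simp [h, zero_pow hk0] at hωk
  have hωnorm : ‖ω‖ = 1 := Complex.norm_eq_one_of_pow_eq_one hωk hk0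
  have hgeo : ∀ n : ℕ, (∑ j ∈ Finset.range k, (ω ^ n) ^ j) = if k ∣ n then (k : ℂ) else 0 := by
    intro n
    by_cases hd : k ∣ n
    · obtain ⟨c, rfl⟩ := hd
      rw [if_pos ⟨c, rfl⟩]
      have h1 : ω ^ (k * c) = 1 := by rw [pow_mul, hωk, one_pow]
      simp [h1]
    · rw [if_neg hd]
      have hne : ω ^ n ≠ 1 := fun h => hd ((hprim.pow_eq_one_iff_dvd n).mp h)
      rw [geom_sum_eq hne]
      have h1 : (ω ^ n) ^ k = 1 := by rw [← pow_mul, mul_comm, pow_mul, hωk, one_pow]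
      rw [h1]
      simp
  -- key identity: k • ψ (s^k) = ∑_{j<k} φ (ω^j s)
  have hkey : ∀ s : ℂ, ‖s‖ < 1 →
      (k : ℂ) * ψ (s ^ k) = ∑ j ∈ Finset.range k, φ (ω ^ j * s) := by
    intro s hs
    have hsk : ‖s ^ k‖ < 1 := by
      rw [norm_pow]
      exact pow_lt_one₀ (norm_nonneg s) hs hk0
    have hterm : ∀ j : ℕ, HasSum (fun n => p.coeff n * (ω ^ j * s) ^ n) (φ (ω ^ j * s)) := by
      intro j
      apply hrep
      rw [norm_mul, norm_pow, hωnorm, one_pow, one_mul]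
      exact hs
    calc (k : ℂ) * ψ (s ^ k)
        = (k : ℂ) * ∑' m, p.coeff (k * m) * (s ^ k) ^ m := by rw [(hψrep _ hsk).tsum_eq]
      _ = ∑' m, (k : ℂ) * (p.coeff (k * m) * (s ^ k) ^ m) := (_root_.tsum_mul_left).symm
      _ = ∑' m, (fun n => (if k ∣ n then (k : ℂ) else 0) * (p.coeff n * s ^ n)) (k * m) := by
          refine tsum_congr fun m => ?_
          simp only [if_pos (Dvd.intro m rfl), pow_mul]
      _ = ∑' n, (if k ∣ n then (k : ℂ) else 0) * (p.coeff n * s ^ n) := by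
          refine Function.Injective.tsum_eq (g := fun m : ℕ => k * m)
            (f := fun n => (if k ∣ n then (k : ℂ) else 0) * (p.coeff n * s ^ n)) ?_ ?_
          · intro x y hxy
            exact Nat.eq_of_mul_eq_mul_left (Nat.pos_of_ne_zero hk0) hxy
          · intro n hn
            by_cases h : k ∣ n
            · obtain ⟨m, rfl⟩ := h
              exact ⟨m, rfl⟩
            · simp [h] at hn
      _ = ∑' n, ∑ j ∈ Finset.range k, p.coeff n * (ω ^ j * s) ^ n := by
          refine tsum_congr fun n => ?_
          have h2 : ∀ j ∈ Finset.range k,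
              p.coeff n * (ω ^ j * s) ^ n = (ω ^ n) ^ j * (p.coeff n * s ^ n) := by
            intro j _
            rw [mul_pow, pow_right_comm]
            ring
          rw [Finset.sum_congr rfl h2, ← Finset.sum_mul, hgeo n]
      _ = ∑ j ∈ Finset.range k, ∑' n, p.coeff n * (ω ^ j * s) ^ n :=
          Summable.tsum_finsetSum fun j _ => (hterm j).summable
      _ = ∑ j ∈ Finset.range k, φ (ω ^ j * s) :=
          Finset.sum_congr rfl fun j _ => (hterm j).tsum_eq
  -- ψ 0 = 0
  have hψ0 : ψ 0 = 0 := by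
    have h0 := hkey 0 (by simp)
    rw [zero_pow hk0] at h0
    have h1 : ∑ j ∈ Finset.range k, φ (ω ^ j * 0) = 0 := by simp [hφ0]
    rw [h1] at h0
    exact (mul_eq_zero.mp h0).resolve_left hkC
  -- ‖ψ‖ ≤ M / C₁ on the unit ball
  have hψB : ∀ z ∈ ball (0 : ℂ) 1, ‖ψ z‖ ≤ M / C₁ := by
    intro z hz
    obtain ⟨s, hsk⟩ := IsAlgClosed.exists_pow_nat_eq z (Nat.pos_of_ne_zero hk0)
    have hs1 : ‖s‖ < 1 := by
      by_contra hcon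
      push_neg at hcon
      have h1 : (1 : ℝ) ≤ ‖s‖ ^ k := one_le_pow₀ hcon
      rw [← norm_pow, hsk] at h1
      exact absurd (mem_ball_zero_iff.mp hz) (not_lt.mpr h1)
    have hid := hkey s hs1
    rw [hsk] at hid
    have hbound : ‖∑ j ∈ Finset.range k, φ (ω ^ j * s)‖ ≤ (k : ℝ) * (M / C₁) := by
      refine le_trans (norm_sum_le _ _) ?_
      calc ∑ j ∈ Finset.range k, ‖φ (ω ^ j * s)‖
          ≤ ∑ _j ∈ Finset.range k, (M / C₁) := by
            refine Finset.sum_le_sum fun j _ => ?_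
            refine hφB' _ ?_
            rw [mem_ball_zero_iff, norm_mul, norm_pow, hωnorm, one_pow, one_mul]
            exact hs1
        _ = (k : ℝ) * (M / C₁) := by
            rw [Finset.sum_const, Finset.card_range, nsmul_eq_mul]
    rw [← hid, norm_mul] at hbound
    have hknorm : ‖(k : ℂ)‖ = (k : ℝ) := by simp
    rw [hknorm] at hbound
    have hkpos : (0 : ℝ) < k := by
      exact_mod_cast Nat.pos_of_ne_zero hk0
    exact le_of_mul_le_mul_left hbound hkpos
  -- ψ (t^k) = 1
  have hψt : ψ (t ^ k) = 1 := by
    have hid := hkey t ht1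
    have hone : ∀ j ∈ Finset.range k, φ (ω ^ j * t) = 1 := by
      intro j _
      have hz0 : ω ^ j * t ≠ 0 := mul_ne_zero (pow_ne_zero j hω0) ht0
      have hzc : ω ^ j * t ∈ closedBall (0 : ℂ) 1 := by
        rw [mem_closedBall_zero_iff, norm_mul, norm_pow, hωnorm, one_pow, one_mul]
        exact ht1.le
      have hFz : F (ω ^ j * t) ≠ 0 := hFne _ hzc hz0
      have hagr : F (ω ^ j * t) = G (ω ^ j * t) :=
        hagree (ω ^ j) (by rw [← pow_mul, mul_comm, pow_mul, hωk, one_pow])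
      rw [hφne _ hz0, ← hagr, div_self hFz]
    rw [Finset.sum_congr rfl hone, Finset.sum_const, Finset.card_range,
      nsmul_eq_mul, mul_one] at hid
    exact mul_left_cancel₀ hkC (hid.trans (mul_one _).symm)
  -- Schwarz lemma
  have hSch : ∀ ε : ℝ, 0 < ε → 1 ≤ (M / C₁ + ε) * ‖t‖ ^ k := by
    intro ε hε
    have hmaps : Set.MapsTo ψ (ball (0 : ℂ) 1) (ball (ψ 0) (M / C₁ + ε)) := by
      intro z hz
      rw [hψ0, mem_ball_zero_iff]
      exact lt_of_le_of_lt (hψB z hz) (lt_add_of_pos_right _ hε)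
    have htk : t ^ k ∈ ball (0 : ℂ) 1 := by
      rw [mem_ball_zero_iff, norm_pow]
      exact pow_lt_one₀ (norm_nonneg t) ht1 hk0
    have hd := Complex.dist_le_div_mul_dist_of_mapsTo_ball hψd (hmaps.mono_right ball_subset_closedBall) htk
    rw [hψt, hψ0, dist_zero_right, dist_zero_right, norm_one, norm_pow, div_one] at hd
    exact hd
  have hfinal : 1 ≤ M / C₁ * ‖t‖ ^ k := by
    have htk0 : (0 : ℝ) < ‖t‖ ^ k := pow_pos htpos k
    refine le_of_forall_pos_le_add fun ε hε => ?_
    have h1 := hSch (ε / ‖t‖ ^ k) (by positivity)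
    calc (1 : ℝ) ≤ (M / C₁ + ε / ‖t‖ ^ k) * ‖t‖ ^ k := h1
      _ = M / C₁ * ‖t‖ ^ k + ε := by
        rw [add_mul, div_mul_cancel₀ _ (ne_of_gt htk0)]
  rw [div_le_iff₀ (pow_pos htpos k)]
  have hMC : M / C₁ * C₁ = M := div_mul_cancel₀ M (ne_of_gt hC₁pos)
  have h2 := mul_le_mul_of_nonneg_right hfinal hC₁pos.le
  rw [one_mul] at h2
  calc C₁ ≤ M / C₁ * ‖t‖ ^ k * C₁ := h2
    _ = M / C₁ * C₁ * ‖t‖ ^ k := by ring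
    _ = M * ‖t‖ ^ k := by rw [hMC]
end

section
/- Special case of the root-of-unity lemma: let $p, k \in \mathbb{N}$ with $k \geq 1$, let $F(s) = s^p$, and let $G$ be holomorphic on the open unit disc $\Delta$ with $G(s) = o(s^p)$ as $s \to 0$. If $t \in \Delta \setminus \{0\}$ satisfies $G(\omega t) = (\omega t)^p$ for every $k$-th root of unity $\omega$, then $\sup_{s \in \Delta} |G(s)| \geq |t|^{-k}$. -/
open Metric Filter Topology

lemma dslope_step (f : ℂ → ℂ) (hf : DifferentiableOn ℂ f (ball (0:ℂ) 1)) (M : ℝ)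
    (hM : ∀ s ∈ ball (0:ℂ) 1, ‖f s‖ ≤ M) (h0 : f 0 = 0) :
    DifferentiableOn ℂ (dslope f 0) (ball (0:ℂ) 1) ∧
      ∀ s ∈ ball (0:ℂ) 1, ‖dslope f 0 s‖ ≤ M := by
  constructor
  · exact (Complex.differentiableOn_dslope (isOpen_ball.mem_nhds (by simp))).mpr hf
  · intro s hs
    refine le_of_forall_pos_le_add fun ε hε => ?_
    have hmaps : Set.MapsTo f (ball (0:ℂ) 1) (ball (f 0) (M + ε)) := by
      intro z hz
      rw [h0, mem_ball, dist_zero_right]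
      exact lt_of_le_of_lt (hM z hz) (lt_add_of_pos_right _ hε)
    simpa using Complex.norm_dslope_le_div_of_mapsTo_ball hf (hmaps.mono_right ball_subset_closedBall) hs

/-- Special case of the root-of-unity lemma with `F s = s ^ p`. -/
theorem stmt1 (p k : ℕ) (hk : 1 ≤ k) (G : ℂ → ℂ)
    (hG : DifferentiableOn ℂ G (ball (0 : ℂ) 1))
    (hlittle : G =o[nhdsWithin (0 : ℂ) {0}ᶜ] fun s => s ^ p)
    (t : ℂ) (ht : t ∈ ball (0 : ℂ) 1) (ht0 : t ≠ 0)
    (hagree : ∀ ω : ℂ, ω ^ k = 1 → G (ω * t) = (ω * t) ^ p) :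
    ∀ M : ℝ, (∀ s ∈ ball (0 : ℂ) 1, ‖G s‖ ≤ M) → (‖t‖ ^ k)⁻¹ ≤ M := by
  intro M hM
  have hk0 : k ≠ 0 := by omega
  have hkc : (k : ℂ) ≠ 0 := Nat.cast_ne_zero.mpr hk0
  set ζ : ℂ := Complex.exp (2 * Real.pi * Complex.I / k) with hζdef
  have hprim : IsPrimitiveRoot ζ k := Complex.isPrimitiveRoot_exp k hk0
  have hζk : ζ ^ k = 1 := hprim.pow_eq_one
  have hζ0 : ζ ≠ 0 := fun h => by simp [h, zero_pow hk0] at hζk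
  have hζnorm : ‖ζ‖ = 1 := by
    rw [hζdef, Complex.norm_exp]
    norm_num [Complex.div_re, Complex.mul_re, Complex.mul_im]
  set G₁ : ℂ → ℂ := fun s => (k:ℂ)⁻¹ * ∑ j ∈ Finset.range k, (ζ ^ j)⁻¹ ^ p * G (ζ ^ j * s)
    with hG₁def
  have hζjnorm : ∀ j : ℕ, ‖ζ ^ j‖ = 1 := fun j => by rw [norm_pow, hζnorm, one_pow]
  have hmem : ∀ j : ℕ, ∀ s ∈ ball (0:ℂ) 1, ζ ^ j * s ∈ ball (0:ℂ) 1 := by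
    intro j s hs
    rw [mem_ball, dist_zero_right] at hs ⊢
    rw [norm_mul, hζjnorm, one_mul]; exact hs
  have hMnn : 0 ≤ M := le_trans (norm_nonneg _) (hM 0 (by simp))
  have hG₁bound : ∀ s ∈ ball (0:ℂ) 1, ‖G₁ s‖ ≤ M := by
    intro s hs
    simp only [hG₁def]
    calc ‖(k:ℂ)⁻¹ * ∑ j ∈ Finset.range k, (ζ ^ j)⁻¹ ^ p * G (ζ ^ j * s)‖
        ≤ (k:ℝ)⁻¹ * ∑ j ∈ Finset.range k, M := by
          rw [norm_mul]
          refine mul_le_mul ?_ ?_ (norm_nonneg _) (by positivity)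
          · rw [norm_inv, Complex.norm_natCast]
          · refine le_trans (norm_sum_le _ _) (Finset.sum_le_sum fun j _ => ?_)
            rw [norm_mul, norm_pow, norm_inv, hζjnorm, inv_one, one_pow, one_mul]
            exact hM _ (hmem j s hs)
      _ = M := by
          rw [Finset.sum_const, Finset.card_range, nsmul_eq_mul, ← mul_assoc,
            inv_mul_cancel₀ (by exact_mod_cast hkc), one_mul]
  have hG₁t : G₁ t = t ^ p := by
    simp only [hG₁def]
    have hterm : ∀ j ∈ Finset.range k, (ζ ^ j)⁻¹ ^ p * G (ζ ^ j * t) = t ^ p := by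
      intro j _
      rw [hagree (ζ ^ j) (by rw [← pow_mul, mul_comm, pow_mul, hζk, one_pow]), mul_pow,
        ← mul_assoc, ← mul_pow, inv_mul_cancel₀ (pow_ne_zero _ hζ0), one_pow, one_mul]
    rw [Finset.sum_congr rfl hterm, Finset.sum_const, Finset.card_range, nsmul_eq_mul,
      ← mul_assoc, inv_mul_cancel₀ hkc, one_mul]
  have hG₁diff : DifferentiableOn ℂ G₁ (ball (0:ℂ) 1) := by
    simp only [hG₁def]
    refine DifferentiableOn.const_mul ?_ _
    refine DifferentiableOn.fun_sum fun j _ => DifferentiableOn.const_mul ?_ _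
    exact hG.comp ((differentiable_id.const_mul (ζ ^ j)).differentiableOn)
      (fun s hs => hmem j s hs)
  have htendζ : ∀ j : ℕ, Tendsto (fun s : ℂ => ζ ^ j * s) (𝓝[≠] 0) (𝓝[≠] 0) := by
    intro j
    rw [tendsto_nhdsWithin_iff]
    constructor
    · have h1 : Tendsto (fun s : ℂ => ζ ^ j * s) (𝓝 0) (𝓝 (ζ ^ j * 0)) :=
        (continuous_const.mul continuous_id).tendsto 0
      simpa using h1.mono_left nhdsWithin_le_nhds
    · filter_upwards [self_mem_nhdsWithin] with s hs
      exact mul_ne_zero (pow_ne_zero _ hζ0) hs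
  have hG₁little : G₁ =o[𝓝[≠] (0:ℂ)] fun s => s ^ p := by
    simp only [hG₁def]
    refine Asymptotics.IsLittleO.const_mul_left ?_ _
    refine Asymptotics.IsLittleO.fun_sum fun j _ => ?_
    refine Asymptotics.IsLittleO.const_mul_left ?_ _
    have h1 := hlittle.comp_tendsto (htendζ j)
    have h2 : (fun s : ℂ => (ζ ^ j * s) ^ p) =O[𝓝[≠] (0:ℂ)] fun s => s ^ p := by
      have h3 := (Asymptotics.isBigO_refl (fun s : ℂ => s ^ p)
        (𝓝[≠] (0:ℂ))).const_mul_left ((ζ ^ j) ^ p)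
      refine h3.congr' (Eventually.of_forall fun s => ?_) EventuallyEq.rfl
      show (ζ ^ j) ^ p * s ^ p = (ζ ^ j * s) ^ p
      rw [mul_pow]
    exact h1.trans_isBigO h2
  have hG₁symm : ∀ s : ℂ, G₁ (ζ * s) = ζ ^ p * G₁ s := by
    intro s
    set h : ℕ → ℂ := fun j => (ζ ^ j)⁻¹ ^ p * G (ζ ^ j * s) with hh
    have hterm : ∀ j ∈ Finset.range k,
        (ζ ^ j)⁻¹ ^ p * G (ζ ^ j * (ζ * s)) = ζ ^ p * h (j + 1) := by
      intro j _
      have harg : ζ ^ j * (ζ * s) = ζ ^ (j + 1) * s := by rw [pow_succ]; ring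
      have hz : ζ ^ p * (ζ ^ (j + 1))⁻¹ ^ p * (ζ ^ (j + 1)) ^ p
          = (ζ ^ j)⁻¹ ^ p * (ζ ^ (j + 1)) ^ p := by
        rw [mul_assoc, ← mul_pow, inv_mul_cancel₀ (pow_ne_zero _ hζ0), one_pow, mul_one,
          ← mul_pow, pow_succ, ← mul_assoc, inv_mul_cancel₀ (pow_ne_zero _ hζ0), one_mul]
      have hcoef : (ζ ^ j)⁻¹ ^ p = ζ ^ p * (ζ ^ (j + 1))⁻¹ ^ p :=
        (mul_right_cancel₀ (pow_ne_zero _ (pow_ne_zero _ hζ0)) hz).symm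
      rw [hh]
      simp only
      rw [harg, hcoef, mul_assoc]
    have hper : h k = h 0 := by simp [hh, hζk]
    have hshift : ∑ j ∈ Finset.range k, h (j + 1) = ∑ j ∈ Finset.range k, h j := by
      have e1 := Finset.sum_range_succ h k
      have e2 := Finset.sum_range_succ' h k
      rw [e1, hper] at e2
      exact (add_right_cancel e2).symm
    simp only [hG₁def]
    rw [Finset.sum_congr rfl hterm, ← Finset.mul_sum, hshift]
    ring
  set D : (ℂ → ℂ) → (ℂ → ℂ) := fun f => dslope f 0 with hD
  have main : ∀ n : ℕ, n ≤ p + k →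
      DifferentiableOn ℂ (D^[n] G₁) (ball (0:ℂ) 1) ∧
      (∀ s ∈ ball (0:ℂ) 1, ‖D^[n] G₁ s‖ ≤ M) ∧
      (∀ s : ℂ, G₁ s = s ^ n * D^[n] G₁ s) := by
    intro n hn
    induction n with
    | zero => exact ⟨by simpa using hG₁diff, by simpa using hG₁bound, fun s => by simp⟩
    | succ n ih =>
      obtain ⟨hdiff, hbound, hrel⟩ := ih (by omega)
      set f := D^[n] G₁ with hf
      have hcont : ContinuousAt f 0 :=
        (hdiff.differentiableAt (isOpen_ball.mem_nhds (by simp))).continuousAt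
      have hf0 : f 0 = 0 := by
        by_cases hnp : n ≤ p
        · have hfeq : f =ᶠ[𝓝[≠] (0:ℂ)] fun s => G₁ s * (s ^ n)⁻¹ := by
            filter_upwards [self_mem_nhdsWithin] with s hs
            have hsn : (s : ℂ) ^ n ≠ 0 := pow_ne_zero _ hs
            rw [hrel s]
            field_simp
          have h1 : (fun s : ℂ => G₁ s * (s ^ n)⁻¹) =o[𝓝[≠] (0:ℂ)]
              fun s => s ^ p * (s ^ n)⁻¹ :=
            hG₁little.mul_isBigO (Asymptotics.isBigO_refl _ _)
          have ho : f =o[𝓝[≠] (0:ℂ)] fun s : ℂ => s ^ (p - n) := by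
            refine h1.congr' hfeq.symm ?_
            filter_upwards [self_mem_nhdsWithin] with s hs
            rw [pow_sub₀ _ hs hnp]
          have hb : (fun s : ℂ => s ^ (p - n)) =O[𝓝[≠] (0:ℂ)] (fun _ => (1:ℂ)) := by
            refine Asymptotics.IsBigO.of_bound 1 ?_
            have hball : ∀ᶠ s in 𝓝 (0:ℂ), ‖s‖ < 1 := by
              filter_upwards [Metric.ball_mem_nhds (0:ℂ) one_pos] with s hs
              simpa [dist_zero_right] using hs
            filter_upwards [eventually_nhdsWithin_of_eventually_nhds hball] with s hs
            simp only [norm_pow, norm_one, mul_one]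
            exact pow_le_one₀ (norm_nonneg _) hs.le
          have htend : Tendsto f (𝓝[≠] (0:ℂ)) (𝓝 0) :=
            (Asymptotics.isLittleO_one_iff ℂ).mp (ho.trans_isBigO hb)
          exact tendsto_nhds_unique (hcont.tendsto.mono_left nhdsWithin_le_nhds) htend
        · push_neg at hnp
          have hsym : ∀ᶠ s in 𝓝[≠] (0:ℂ),
              ζ ^ n * f (ζ * s) = ζ ^ p * f s := by
            filter_upwards [self_mem_nhdsWithin] with s hs
            have h1 := hrel (ζ * s)
            rw [hG₁symm s, hrel s, mul_pow] at h1
            have hsn : (s : ℂ) ^ n ≠ 0 := pow_ne_zero _ hs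
            have h2 : s ^ n * (ζ ^ n * f (ζ * s)) = s ^ n * (ζ ^ p * f s) := by
              linear_combination -h1
            exact mul_left_cancel₀ hsn h2
          have hl1 : Tendsto (fun s => ζ ^ n * f (ζ * s)) (𝓝[≠] (0:ℂ))
              (𝓝 (ζ ^ n * f 0)) := by
            have hc2 : Tendsto (fun s : ℂ => f (ζ * s)) (𝓝 (0:ℂ)) (𝓝 (f 0)) := by
              have : Tendsto (fun s : ℂ => ζ * s) (𝓝 0) (𝓝 (ζ * 0)) :=
                (continuous_const.mul continuous_id).tendsto 0
              rw [mul_zero] at this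
              exact hcont.tendsto.comp this
            exact (tendsto_const_nhds.mul hc2).mono_left nhdsWithin_le_nhds
          have hl2 : Tendsto (fun s => ζ ^ p * f s) (𝓝[≠] (0:ℂ)) (𝓝 (ζ ^ p * f 0)) :=
            (tendsto_const_nhds.mul hcont.tendsto).mono_left nhdsWithin_le_nhds
          have heq : ζ ^ n * f 0 = ζ ^ p * f 0 :=
            tendsto_nhds_unique (hl1.congr' hsym) hl2
          have hne : ζ ^ n ≠ ζ ^ p := by
            intro h
            have hd : ζ ^ (n - p) * ζ ^ p = 1 * ζ ^ p := by
              rw [← pow_add, one_mul]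
              rw [show n - p + p = n by omega, h]
            have : ζ ^ (n - p) = 1 := mul_right_cancel₀ (pow_ne_zero _ hζ0) hd
            exact hprim.pow_ne_one_of_pos_of_lt (by omega) (by omega) this
          by_contra hf0ne
          exact hne (mul_right_cancel₀ hf0ne heq)
      obtain ⟨hd2, hb2⟩ := dslope_step f hdiff M hbound hf0
      refine ⟨by rw [Function.iterate_succ_apply']; exact hd2,
        by rw [Function.iterate_succ_apply']; exact hb2, ?_⟩
      intro s
      rw [Function.iterate_succ_apply']
      have hrec : s * dslope f 0 s = f s := by
        have h3 := sub_smul_dslope f 0 s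
        simpa [hf0] using h3
      calc G₁ s = s ^ n * f s := hrel s
        _ = s ^ (n + 1) * D f s := by rw [← hrec, hD]; ring
  obtain ⟨-, hbound, hrel⟩ := main (p + k) le_rfl
  have h1 : ‖t‖ ^ p = ‖t‖ ^ (p + k) * ‖D^[p + k] G₁ t‖ := by
    calc ‖t‖ ^ p = ‖t ^ p‖ := (norm_pow t p).symm
      _ = ‖G₁ t‖ := by rw [hG₁t]
      _ = ‖t ^ (p + k) * D^[p + k] G₁ t‖ := by rw [hrel t]
      _ = ‖t‖ ^ (p + k) * ‖D^[p + k] G₁ t‖ := by rw [norm_mul, norm_pow]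
  have h2 : ‖D^[p + k] G₁ t‖ ≤ M := hbound t ht
  have htpos : 0 < ‖t‖ := norm_pos_iff.mpr ht0
  have hkpos : 0 < ‖t‖ ^ k := pow_pos htpos k
  have hppos : 0 < ‖t‖ ^ p := pow_pos htpos p
  set X := ‖D^[p + k] G₁ t‖ with hX
  have hXnn : 0 ≤ X := norm_nonneg _
  have h4 : (1:ℝ) = ‖t‖ ^ k * X := by
    rw [pow_add] at h1
    have h5 : ‖t‖ ^ p * 1 = ‖t‖ ^ p * (‖t‖ ^ k * X) := by
      rw [mul_one, ← mul_assoc]; exact h1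
    exact mul_left_cancel₀ (ne_of_gt hppos) h5
  rw [← one_div, div_le_iff₀ hkpos]
  calc (1:ℝ) = ‖t‖ ^ k * X := h4
    _ ≤ ‖t‖ ^ k * M := mul_le_mul_of_nonneg_left h2 hkpos.le
    _ = M * ‖t‖ ^ k := mul_comm _ _
end

section
/- Let $U \subseteq \mathbb{C}^m$ be open, $x \in U$, and let $V \subseteq U$ be an open neighborhood of $x$. Suppose $f : V \to \mathbb{C}$ and $u : V \to [-\infty, \infty]$ are measurable with $\int_V |f|^2 e^{-u} \, d\lambda < \infty$ (Lebesgue measure on $\mathbb{C}^m$). Write points of $\mathbb{C}^m$ as $(z_1, z')$ with $z_1 \in \mathbb{C}$ and assume $x = 0$. Then $\liminf_{\sigma \to 0} |\sigma|^2 \int_{\{z' : (\sigma, z') \in V\}} |f(\sigma, z')|^2 e^{-u(\sigma, z')} \, d\lambda_{2m-2}(z') = 0$. -/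
open Filter MeasureTheory
open scoped ENNReal NNReal

/-- `e^{-u}` for an extended-real-valued weight `u`, valued in `[0,∞]`,
with the conventions `e^{-(+∞)} = 0` and `e^{-(-∞)} = ∞`. -/
noncomputable def expNeg (x : EReal) : ℝ≥0∞ :=
  if x = ⊤ then 0 else if x = ⊥ then ⊤ else ENNReal.ofReal (Real.exp (-x.toReal))

lemma measurable_expNeg : Measurable expNeg := by
  unfold expNeg
  refine Measurable.ite (measurableSet_eq) measurable_const ?_
  refine Measurable.ite (measurableSet_eq) measurable_const ?_
  exact ENNReal.measurable_ofReal.comp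
    (Real.measurable_exp.comp (measurable_neg.comp measurable_ereal_toReal))

/-- Divergence of `∫ 1/|σ|²` near `0` in `ℂ`. -/
lemma lintegral_inv_sq_eq_top {ε : ℝ} (hε : 0 < ε) :
    ∫⁻ σ in Metric.ball (0 : ℂ) ε \ {0}, ((‖σ‖₊ : ℝ≥0∞) ^ 2)⁻¹ = ⊤ := by
  set A : ℕ → Set ℂ := fun k => Metric.ball 0 (ε / 2 ^ k) \ Metric.ball 0 (ε / 2 ^ (k + 1))
    with hA
  have hrpos : ∀ k : ℕ, 0 < ε / 2 ^ k := fun k => by positivity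
  have hrmono : ∀ j k : ℕ, j ≤ k → ε / 2 ^ k ≤ ε / 2 ^ j := fun j k hjk => by
    apply div_le_div_of_nonneg_left hε.le (by positivity)
    exact pow_le_pow_right₀ one_le_two hjk
  have hAm : ∀ k, MeasurableSet (A k) := fun k =>
    measurableSet_ball.diff measurableSet_ball
  have hAsub : ∀ k, A k ⊆ Metric.ball (0 : ℂ) ε \ {0} := by
    intro k σ hσ
    refine ⟨Metric.ball_subset_ball ?_ hσ.1, ?_⟩
    · calc ε / 2 ^ k ≤ ε / 2 ^ 0 := hrmono 0 k (Nat.zero_le k)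
        _ = ε := by norm_num
    · intro h
      rw [Set.mem_singleton_iff] at h
      refine hσ.2 ?_
      rw [h, Metric.mem_ball, dist_self]
      exact hrpos (k + 1)
  have hdisj : Pairwise (Function.onFun Disjoint A) := by
    have key : ∀ j k : ℕ, j < k → Disjoint (A j) (A k) := by
      intro j k hjk
      refine Set.disjoint_left.mpr fun σ hσj hσk => ?_
      exact hσj.2 (Metric.ball_subset_ball (hrmono (j + 1) k hjk) hσk.1)
    intro j k hjk
    rcases hjk.lt_or_gt with h | h
    · exact key _ _ h
    · exact (key _ _ h).symm
  have hbound : ∀ k : ℕ, ENNReal.ofReal (3 / 4 * Real.pi) ≤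
      ∫⁻ σ in A k, ((‖σ‖₊ : ℝ≥0∞) ^ 2)⁻¹ := by
    intro k
    set r : ℝ := ε / 2 ^ k with hrdef
    have hr : 0 < r := hrpos k
    have hsub : Metric.ball (0 : ℂ) (ε / 2 ^ (k + 1)) ⊆ Metric.ball (0 : ℂ) r :=
      Metric.ball_subset_ball (hrmono k (k + 1) (Nat.le_succ k))
    -- pointwise bound
    have hpt : ∀ σ ∈ A k, (ENNReal.ofReal (r ^ 2))⁻¹ ≤ ((‖σ‖₊ : ℝ≥0∞) ^ 2)⁻¹ := by
      intro σ hσ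
      apply ENNReal.inv_le_inv.mpr
      have hσr : ‖σ‖ ≤ r := by
        have := hσ.1
        rw [Metric.mem_ball, dist_zero_right] at this
        exact this.le
      have h1 : (‖σ‖₊ : ℝ≥0∞) ≤ ENNReal.ofReal r := by
        rw [show (‖σ‖₊ : ℝ≥0∞) = ENNReal.ofReal ‖σ‖ from (ofReal_norm σ).symm]
        exact ENNReal.ofReal_le_ofReal hσr
      calc (‖σ‖₊ : ℝ≥0∞) ^ 2 ≤ (ENNReal.ofReal r) ^ 2 := pow_le_pow_left' h1 2
        _ = ENNReal.ofReal (r ^ 2) := (ENNReal.ofReal_pow hr.le 2).symm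
    -- volume of the annulus
    have hvol : volume (A k) = ENNReal.ofReal (r ^ 2 * (3 / 4 * Real.pi)) := by
      rw [hA]
      rw [measure_diff hsub measurableSet_ball.nullMeasurableSet
        (by rw [Complex.volume_ball]
            exact ENNReal.mul_ne_top (ENNReal.pow_ne_top ENNReal.ofReal_ne_top)
              ENNReal.coe_ne_top)]
      rw [Complex.volume_ball, Complex.volume_ball]
      have hpi : (NNReal.pi : ℝ≥0∞) = ENNReal.ofReal Real.pi := by
        rw [← ENNReal.ofReal_coe_nnreal, NNReal.coe_real_pi]
      have hhalf : ε / 2 ^ (k + 1) = r / 2 := by rw [hrdef]; ring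
      rw [hhalf, hpi, ← ENNReal.ofReal_pow hr.le, ← ENNReal.ofReal_pow (by positivity : (0:ℝ) ≤ r / 2),
        ← ENNReal.ofReal_mul (by positivity), ← ENNReal.ofReal_mul (by positivity),
        ← ENNReal.ofReal_sub _ (by positivity)]
      congr 1
      ring
    have hb0 : ENNReal.ofReal (r ^ 2) ≠ 0 := (ENNReal.ofReal_pos.mpr (by positivity)).ne'
    have hbt : ENNReal.ofReal (r ^ 2) ≠ ⊤ := ENNReal.ofReal_ne_top
    have hcalc : (ENNReal.ofReal (r ^ 2))⁻¹ * volume (A k) = ENNReal.ofReal (3 / 4 * Real.pi) := by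
      rw [hvol, ENNReal.ofReal_mul (by positivity : (0:ℝ) ≤ r ^ 2), ← mul_assoc,
        ENNReal.inv_mul_cancel hb0 hbt, one_mul]
    calc ENNReal.ofReal (3 / 4 * Real.pi) = (ENNReal.ofReal (r ^ 2))⁻¹ * volume (A k) := hcalc.symm
      _ = ∫⁻ _ in A k, (ENNReal.ofReal (r ^ 2))⁻¹ := (setLIntegral_const _ _).symm
      _ ≤ ∫⁻ σ in A k, ((‖σ‖₊ : ℝ≥0∞) ^ 2)⁻¹ := setLIntegral_mono' (hAm k) hpt
  have hconst : (∑' _ : ℕ, ENNReal.ofReal (3 / 4 * Real.pi)) = ⊤ :=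
    ENNReal.tsum_const_eq_top_of_ne_zero (by
      simp [ENNReal.ofReal_eq_zero, not_le]
      positivity)
  refine top_le_iff.mp ?_
  calc (⊤ : ℝ≥0∞) = ∑' k : ℕ, ENNReal.ofReal (3 / 4 * Real.pi) := hconst.symm
    _ ≤ ∑' k : ℕ, ∫⁻ σ in A k, ((‖σ‖₊ : ℝ≥0∞) ^ 2)⁻¹ := ENNReal.tsum_le_tsum hbound
    _ = ∫⁻ σ in ⋃ k, A k, ((‖σ‖₊ : ℝ≥0∞) ^ 2)⁻¹ := (lintegral_iUnion hAm hdisj _).symm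
    _ ≤ ∫⁻ σ in Metric.ball (0 : ℂ) ε \ {0}, ((‖σ‖₊ : ℝ≥0∞) ^ 2)⁻¹ :=
        lintegral_mono' (Measure.restrict_mono (Set.iUnion_subset hAsub) le_rfl) le_rfl

/-- The "only if" direction of Lemma 2.1 in slice form: if `∫_V |f|² e^{-u} < ∞`
(on a neighborhood `V` of `0` in `ℂ × ℂⁿ`), then the slice integrals satisfy
`liminf_{σ → 0} |σ|² ∫_{V ∩ {z₁ = σ}} |f|² e^{-u} = 0`. -/
theorem stmt6 (n : ℕ) (U V : Set (ℂ × (Fin n → ℂ))) (hU : IsOpen U) (hV : IsOpen V)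
    (h0 : (0 : ℂ × (Fin n → ℂ)) ∈ V) (hVU : V ⊆ U)
    (f : ℂ × (Fin n → ℂ) → ℂ) (hf : Measurable f)
    (u : ℂ × (Fin n → ℂ) → EReal) (hu : Measurable u)
    (hint : ∫⁻ z in V, (‖f z‖₊ : ℝ≥0∞) ^ 2 * expNeg (u z) < ∞) :
    Filter.liminf
      (fun σ : ℂ => (‖σ‖₊ : ℝ≥0∞) ^ 2 *
        ∫⁻ z' in {z' : Fin n → ℂ | (σ, z') ∈ V}, (‖f (σ, z')‖₊ : ℝ≥0∞) ^ 2 * expNeg (u (σ, z')))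
      (nhdsWithin (0 : ℂ) {0}ᶜ) = 0 := by
  set g : ℂ × (Fin n → ℂ) → ℝ≥0∞ := fun z => (‖f z‖₊ : ℝ≥0∞) ^ 2 * expNeg (u z) with hgdef
  have hg : Measurable g :=
    ((hf.nnnorm.coe_nnreal_ennreal).pow_const 2).mul (measurable_expNeg.comp hu)
  set G : ℂ × (Fin n → ℂ) → ℝ≥0∞ := V.indicator g with hGdef
  have hG : Measurable G := hg.indicator hV.measurableSet
  set Φ : ℂ → ℝ≥0∞ := fun σ => ∫⁻ z' in {z' : Fin n → ℂ | (σ, z') ∈ V}, g (σ, z') with hΦdef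
  have hslice : ∀ σ : ℂ, (∫⁻ z', G (σ, z')) = Φ σ := by
    intro σ
    have hms : MeasurableSet {z' : Fin n → ℂ | (σ, z') ∈ V} :=
      hV.measurableSet.preimage measurable_prodMk_left
    show (∫⁻ z', G (σ, z')) = ∫⁻ z' in {z' : Fin n → ℂ | (σ, z') ∈ V}, g (σ, z')
    rw [← lintegral_indicator hms]
    refine lintegral_congr fun z' => ?_
    by_cases h : (σ, z') ∈ V <;> simp [hGdef, Set.indicator, h]
  have hΦint : ∫⁻ σ, Φ σ < ∞ := by
    have h1 : ∫⁻ z in V, g z = ∫⁻ z, G z := (lintegral_indicator hV.measurableSet g).symm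
    have h2 : ∫⁻ z, G z = ∫⁻ σ, ∫⁻ z', G (σ, z') := by
      rw [MeasureTheory.Measure.volume_eq_prod, lintegral_prod _ hG.aemeasurable]
    calc ∫⁻ σ, Φ σ = ∫⁻ σ, ∫⁻ z', G (σ, z') := by simp_rw [hslice]
      _ = ∫⁻ z in V, g z := by rw [← h2, ← h1]
      _ < ∞ := hint
  by_contra hne
  have hpos : 0 < Filter.liminf (fun σ : ℂ => (‖σ‖₊ : ℝ≥0∞) ^ 2 * Φ σ)
      (nhdsWithin (0 : ℂ) {0}ᶜ) := pos_iff_ne_zero.mpr hne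
  obtain ⟨c, hc0, hclt⟩ := exists_between hpos
  have hcne : c ≠ ⊤ := ne_top_of_lt hclt
  have hev : ∀ᶠ σ in nhdsWithin (0 : ℂ) {0}ᶜ, c < (‖σ‖₊ : ℝ≥0∞) ^ 2 * Φ σ :=
    eventually_lt_of_lt_liminf hclt
  rw [eventually_nhdsWithin_iff, Metric.eventually_nhds_iff] at hev
  obtain ⟨ε, hε, hball⟩ := hev
  have key : ∀ σ ∈ Metric.ball (0 : ℂ) ε \ {0}, c * ((‖σ‖₊ : ℝ≥0∞) ^ 2)⁻¹ ≤ Φ σ := by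
    intro σ hσ
    have hσ0 : σ ≠ 0 := hσ.2
    have hlt : c < (‖σ‖₊ : ℝ≥0∞) ^ 2 * Φ σ := by
      refine hball ?_ hσ0
      simpa using hσ.1
    have hn0 : ((‖σ‖₊ : ℝ≥0∞) ^ 2) ≠ 0 := by
      apply pow_ne_zero
      simpa using hσ0
    have hnt : ((‖σ‖₊ : ℝ≥0∞) ^ 2) ≠ ⊤ := by
      exact ENNReal.pow_ne_top ENNReal.coe_ne_top
    calc c * ((‖σ‖₊ : ℝ≥0∞) ^ 2)⁻¹ ≤ ((‖σ‖₊ : ℝ≥0∞) ^ 2 * Φ σ) * ((‖σ‖₊ : ℝ≥0∞) ^ 2)⁻¹ :=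
          mul_le_mul_left hlt.le _
      _ = Φ σ := by
          rw [mul_comm ((‖σ‖₊ : ℝ≥0∞) ^ 2) (Φ σ), mul_assoc,
            ENNReal.mul_inv_cancel hn0 hnt, mul_one]
  have htop : (⊤ : ℝ≥0∞) ≤ ∫⁻ σ, Φ σ := by
    calc (⊤ : ℝ≥0∞) = c * ∫⁻ σ in Metric.ball (0 : ℂ) ε \ {0}, ((‖σ‖₊ : ℝ≥0∞) ^ 2)⁻¹ := by
          rw [lintegral_inv_sq_eq_top hε, ENNReal.mul_top hc0.ne']
      _ = ∫⁻ σ in Metric.ball (0 : ℂ) ε \ {0}, c * ((‖σ‖₊ : ℝ≥0∞) ^ 2)⁻¹ :=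
          (lintegral_const_mul' c _ hcne).symm
      _ ≤ ∫⁻ σ in Metric.ball (0 : ℂ) ε \ {0}, Φ σ :=
          setLIntegral_mono' (measurableSet_ball.diff (measurableSet_singleton 0)) key
      _ ≤ ∫⁻ σ, Φ σ := setLIntegral_le_lintegral _ _
  exact absurd (lt_of_le_of_lt htop hΦint) (by simp)
end

section
/- With $\sigma_\nu = 1 - 1/\nu$ and $f_\nu(z) \equiv 1/\nu^2$ for $\nu \geq 1$, the section $f = (f_\nu)$ of the trivial $\ell^2$-bundle over the unit disc satisfies: for every $0 < \rho \leq 1$, $\int_{\{|z|<\rho\}} \sum_\nu \nu^{-4} |z|^{-2(1 - 1/\nu)} \, d\lambda_2(z) < \infty$, but for every $j \geq 1$ and every $\rho > 0$, $\int_{\{|z|<\rho\}} \sum_\nu \nu^{-4} |z|^{-2(1+1/j)(1 - 1/\nu)} \, d\lambda_2(z) = \infty$. -/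
open Metric MeasureTheory
open scoped ENNReal NNReal

open Set
theorem polarC17 (f : ℝ → ℝ≥0∞) (hf : Measurable f) :
    ∫⁻ z : ℂ, f ‖z‖ = (volume : Measure ℂ).toSphere univ *
      ∫⁻ r in Ioi (0:ℝ), f r * ENNReal.ofReal r := by
  have hmp := (volume : Measure ℂ).measurePreserving_homeomorphUnitSphereProd
  have hdim : Module.finrank ℝ ℂ - 1 = 1 := by
    rw [Complex.finrank_real_complex]
  rw [hdim] at hmp
  have hfs : Measurable fun p : sphere (0:ℂ) 1 × Ioi (0:ℝ) => f p.2.1 :=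
    hf.comp (measurable_subtype_coe.comp measurable_snd)
  calc ∫⁻ z : ℂ, f ‖z‖
      = ∫⁻ z in ({0}ᶜ : Set ℂ), f ‖z‖ := by
        rw [← lintegral_add_compl (fun z : ℂ => f ‖z‖) (MeasurableSet.singleton 0)]
        simp [lintegral_singleton]
    _ = ∫⁻ x : ({0}ᶜ : Set ℂ), f ‖x.1‖ ∂(volume.comap Subtype.val) := by
        rw [lintegral_subtype_comap (MeasurableSet.singleton (0:ℂ)).compl (fun z => f ‖z‖)]
    _ = ∫⁻ p : sphere (0:ℂ) 1 × Ioi (0:ℝ), f p.2.1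
        ∂(((volume : Measure ℂ).toSphere).prod (Measure.volumeIoiPow 1)) := by
        rw [← hmp.lintegral_comp hfs]
        exact lintegral_congr fun x => by simp
    _ = (volume : Measure ℂ).toSphere univ * ∫⁻ r : Ioi (0:ℝ), f r.1 ∂(Measure.volumeIoiPow 1) := by
        rw [lintegral_prod _ hfs.aemeasurable]
        simp [lintegral_const, mul_comm]
    _ = (volume : Measure ℂ).toSphere univ * ∫⁻ r in Ioi (0:ℝ), f r * ENNReal.ofReal r := by
        congr 1
        rw [Measure.volumeIoiPow, lintegral_withDensity_eq_lintegral_mul _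
          (f := fun r : Ioi (0:ℝ) => ENNReal.ofReal (r.1 ^ 1))
          (by exact ENNReal.measurable_ofReal.comp (measurable_subtype_coe.pow_const 1))
          (g := fun r : Ioi (0:ℝ) => f r.1)
          (by exact hf.comp measurable_subtype_coe)]
        simp only [Pi.mul_apply, pow_one]
        rw [lintegral_subtype_comap measurableSet_Ioi (fun r => ENNReal.ofReal r * f r)]
        exact lintegral_congr fun r => mul_comm _ _

theorem polar_ball17 (f : ℝ → ℝ≥0∞) (hf : Measurable f) (ρ : ℝ) :
    ∫⁻ z in ball (0:ℂ) ρ, f ‖z‖ = (volume : Measure ℂ).toSphere univ *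
      ∫⁻ r in Ioo (0:ℝ) ρ, f r * ENNReal.ofReal r := by
  have h1 : ∫⁻ z in ball (0:ℂ) ρ, f ‖z‖ = ∫⁻ z : ℂ, (Iio ρ).indicator f ‖z‖ := by
    rw [← lintegral_indicator (f := fun z : ℂ => f ‖z‖) measurableSet_ball]
    refine lintegral_congr fun z => ?_
    by_cases hz : z ∈ ball (0:ℂ) ρ
    · rw [indicator_of_mem hz]
      exact (indicator_of_mem (show ‖z‖ ∈ Iio ρ from mem_ball_zero_iff.1 hz) f).symm
    · rw [indicator_of_notMem hz]
      exact (indicator_of_notMem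
        (show ‖z‖ ∉ Iio ρ from fun h => hz (mem_ball_zero_iff.2 h)) f).symm
  rw [h1, polarC17 _ (hf.indicator measurableSet_Iio)]
  congr 1
  have h2 : ∀ r : ℝ, (Iio ρ).indicator f r * ENNReal.ofReal r
      = (Iio ρ).indicator (fun r => f r * ENNReal.ofReal r) r := by
    intro r
    by_cases hr : r ∈ Iio ρ <;> simp [indicator_of_mem, indicator_of_notMem, hr]
  simp_rw [h2]
  rw [lintegral_indicator measurableSet_Iio (fun r => f r * ENNReal.ofReal r),
    Measure.restrict_restrict measurableSet_Iio]
  rw [show Iio ρ ∩ Ioi 0 = Ioo 0 ρ from by ext x; simp [mem_Ioo, and_comm]]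

theorem oneD_congr17 {e ρ : ℝ} :
    ∫⁻ r in Ioo (0:ℝ) ρ, (ENNReal.ofReal r ^ e)⁻¹ * ENNReal.ofReal r
      = ∫⁻ r in Ioo (0:ℝ) ρ, ENNReal.ofReal (r ^ (1 - e)) := by
  refine setLIntegral_congr_fun measurableSet_Ioo (fun r hr => ?_)
  have hr0 : 0 < r := hr.1
  rw [ENNReal.ofReal_rpow_of_pos hr0,
    ← ENNReal.ofReal_inv_of_pos (Real.rpow_pos_of_pos hr0 e),
    ← ENNReal.ofReal_mul (by positivity), ← Real.rpow_neg hr0.le,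
    show (r ^ (-e) * r : ℝ) = r ^ (-e) * r ^ (1:ℝ) by rw [Real.rpow_one],
    ← Real.rpow_add hr0]
  ring_nf

theorem oneD_eq17 {e ρ : ℝ} (he : e < 2) (hρ : 0 < ρ) :
    ∫⁻ r in Ioo (0:ℝ) ρ, (ENNReal.ofReal r ^ e)⁻¹ * ENNReal.ofReal r
      = ENNReal.ofReal (ρ ^ (2 - e) / (2 - e)) := by
  rw [oneD_congr17]
  have hint : IntegrableOn (fun r : ℝ => r ^ (1 - e)) (Ioo 0 ρ) :=
    (intervalIntegral.integrableOn_Ioo_rpow_iff hρ).2 (by linarith)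
  rw [← ofReal_integral_eq_lintegral_ofReal hint]
  · congr 1
    rw [← integral_Ioc_eq_integral_Ioo, ← intervalIntegral.integral_of_le hρ.le,
      integral_rpow (Or.inl (by linarith))]
    have h21 : 1 - e + 1 = 2 - e := by ring
    rw [h21, Real.zero_rpow (by intro h; linarith), sub_zero]
  · filter_upwards [ae_restrict_mem measurableSet_Ioo] with r hr
    exact Real.rpow_nonneg hr.1.le _

theorem oneD_top17 {ρ : ℝ} (hρ : 0 < ρ) :
    ∫⁻ r in Ioo (0:ℝ) ρ, (ENNReal.ofReal r ^ (2:ℝ))⁻¹ * ENNReal.ofReal r = ∞ := by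
  rw [oneD_congr17]
  by_contra h
  have hmeas : Measurable fun r : ℝ => r ^ (1 - (2:ℝ)) :=
    measurable_id.pow_const _
  have hint : IntegrableOn (fun r : ℝ => r ^ (1 - (2:ℝ))) (Ioo 0 ρ) := by
    refine ⟨hmeas.aestronglyMeasurable, ?_⟩
    rw [hasFiniteIntegral_iff_ofReal ?_]
    · exact lt_top_iff_ne_top.2 h
    · filter_upwards [ae_restrict_mem measurableSet_Ioo] with r hr
      exact Real.rpow_nonneg hr.1.le _
  have := (intervalIntegral.integrableOn_Ioo_rpow_iff hρ).1 hint
  linarith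

theorem key17 (e ρ : ℝ) :
    ∫⁻ z in ball (0:ℂ) ρ, ((‖z‖₊ : ℝ≥0∞) ^ e)⁻¹
      = (volume : Measure ℂ).toSphere univ *
        ∫⁻ r in Ioo (0:ℝ) ρ, (ENNReal.ofReal r ^ e)⁻¹ * ENNReal.ofReal r := by
  rw [← polar_ball17 (fun r => (ENNReal.ofReal r ^ e)⁻¹)
    ((ENNReal.measurable_ofReal.pow_const _).inv) ρ]
  exact lintegral_congr fun z => by rw [← coe_nnnorm z, ENNReal.ofReal_coe_nnreal]


/-- The counterexample at the end of the paper: with `σ_ν = 1 - 1/ν` and `f_ν ≡ 1/ν²`,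
the section `f = (f_ν)` is square integrable for the metric `h^σ` near `0`, but not for
any of the metrics `h^{(1+1/j)σ}`. -/
theorem stmt17 :
    (∀ ρ : ℝ, 0 < ρ → ρ ≤ 1 →
      ∫⁻ z in ball (0 : ℂ) ρ,
          ∑' ν : ℕ, ((((ν : ℝ≥0∞) + 1) ^ 4)⁻¹ *
            ((‖z‖₊ : ℝ≥0∞) ^ (2 * (1 - 1 / ((ν : ℝ) + 1))))⁻¹) < ∞) ∧
    (∀ j : ℕ, 1 ≤ j → ∀ ρ : ℝ, 0 < ρ →
      ∫⁻ z in ball (0 : ℂ) ρ,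
          ∑' ν : ℕ, ((((ν : ℝ≥0∞) + 1) ^ 4)⁻¹ *
            ((‖z‖₊ : ℝ≥0∞) ^ (2 * (1 + 1 / (j : ℝ)) * (1 - 1 / ((ν : ℝ) + 1))))⁻¹) = ∞) := by
  set T : ℝ≥0∞ := (volume : Measure ℂ).toSphere univ with hT
  have hTtop : T ≠ ⊤ := measure_ne_top _ _
  have hT0 : T ≠ 0 := by
    rw [hT, Measure.toSphere_apply_univ]
    refine mul_ne_zero ?_ (measure_ball_pos volume (0:ℂ) one_pos).ne'
    simp [Complex.finrank_real_complex]
  have hnu : ∀ ν : ℕ, (0:ℝ) < (ν:ℝ) + 1 := fun ν => by positivity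
  have hmz : ∀ e : ℝ, Measurable fun z : ℂ => ((‖z‖₊ : ℝ≥0∞) ^ e)⁻¹ := fun e =>
    ((measurable_coe_nnreal_ennreal.comp measurable_nnnorm).pow_const _).inv
  constructor
  · intro ρ hρ0 hρ1
    rw [lintegral_tsum (f := fun (ν : ℕ) (z : ℂ) => (((ν : ℝ≥0∞) + 1) ^ 4)⁻¹ *
        ((‖z‖₊ : ℝ≥0∞) ^ (2 * (1 - 1 / ((ν : ℝ) + 1))))⁻¹) (fun ν : ℕ =>
      (measurable_const.mul (hmz (2 * (1 - 1 / ((ν : ℝ) + 1))))).aemeasurable)]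
    have hbound : ∀ ν : ℕ,
        ∫⁻ z in ball (0:ℂ) ρ, ((((ν : ℝ≥0∞) + 1) ^ 4)⁻¹ *
          ((‖z‖₊ : ℝ≥0∞) ^ (2 * (1 - 1 / ((ν : ℝ) + 1))))⁻¹)
        ≤ T * (((ν : ℝ≥0∞) + 1) ^ 3)⁻¹ := by
      intro ν
      set e : ℝ := 2 * (1 - 1 / ((ν : ℝ) + 1)) with he
      have he2 : e < 2 := by
        have : 0 < 1 / ((ν:ℝ) + 1) := by positivity
        rw [he]; nlinarith
      rw [lintegral_const_mul _ (hmz e), key17, oneD_eq17 he2 hρ0]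
      have h2e : 2 - e = 2 / ((ν:ℝ) + 1) := by rw [he]; field_simp; ring
      have hval : ρ ^ (2 - e) / (2 - e) ≤ (ν:ℝ) + 1 := by
        have h1 : ρ ^ (2 - e) ≤ 1 :=
          Real.rpow_le_one hρ0.le hρ1 (by rw [h2e]; positivity)
        have h2 : (0:ℝ) < 2 - e := by rw [h2e]; positivity
        calc ρ ^ (2 - e) / (2 - e) ≤ 1 / (2 - e) := by gcongr
          _ = ((ν:ℝ) + 1) / 2 := by rw [h2e]; field_simp
          _ ≤ (ν:ℝ) + 1 := by linarith [hnu ν]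
      have hof : ENNReal.ofReal (ρ ^ (2 - e) / (2 - e)) ≤ (ν : ℝ≥0∞) + 1 := by
        calc ENNReal.ofReal (ρ ^ (2 - e) / (2 - e)) ≤ ENNReal.ofReal ((ν:ℝ) + 1) :=
              ENNReal.ofReal_le_ofReal hval
          _ = (ν : ℝ≥0∞) + 1 := by
              rw [ENNReal.ofReal_add (by positivity) zero_le_one]
              simp
      calc (((ν : ℝ≥0∞) + 1) ^ 4)⁻¹ * (T * ENNReal.ofReal (ρ ^ (2 - e) / (2 - e)))
          ≤ (((ν : ℝ≥0∞) + 1) ^ 4)⁻¹ * (T * ((ν : ℝ≥0∞) + 1)) := by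
            gcongr
        _ = T * ((((ν : ℝ≥0∞) + 1) ^ 4)⁻¹ * ((ν : ℝ≥0∞) + 1)) := by ring
        _ = T * (((ν : ℝ≥0∞) + 1) ^ 3)⁻¹ := by
            congr 1
            have hne : ((ν : ℝ≥0∞) + 1) ≠ 0 := by simp
            have hnt : ((ν : ℝ≥0∞) + 1) ≠ ⊤ := by
              simp [ENNReal.add_ne_top]
            rw [show ((ν : ℝ≥0∞) + 1) ^ 4 = ((ν : ℝ≥0∞) + 1) ^ 3 * ((ν : ℝ≥0∞) + 1) by ring,
              ENNReal.mul_inv (Or.inl (pow_ne_zero _ hne)) (Or.inl (ENNReal.pow_ne_top hnt)),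
              mul_assoc, ENNReal.inv_mul_cancel hne hnt, mul_one]
    refine lt_of_le_of_lt (ENNReal.tsum_le_tsum hbound) ?_
    rw [ENNReal.tsum_mul_left]
    have hsum : (∑' ν : ℕ, (((ν : ℝ≥0∞) + 1) ^ 3)⁻¹) ≠ ⊤ := by
      have heq : ∀ ν : ℕ, (((ν : ℝ≥0∞) + 1) ^ 3)⁻¹ = ENNReal.ofReal (1 / ((ν:ℝ) + 1) ^ 3) := by
        intro ν
        rw [ENNReal.ofReal_div_of_pos (by positivity), ENNReal.ofReal_one,
          ENNReal.ofReal_pow (by positivity),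
          ENNReal.ofReal_add (by positivity) zero_le_one]
        simp [one_div]
      simp_rw [heq]
      have hsummable : Summable (fun ν : ℕ => 1 / ((ν:ℝ) + 1) ^ 3) := by
        have := Real.summable_one_div_nat_pow.mpr (show 2 ≤ 3 by norm_num)
        have h2 := (summable_nat_add_iff 1).mpr this
        refine h2.congr fun ν => ?_
        push_cast
        try ring_nf
      rw [← ENNReal.ofReal_tsum_of_nonneg (fun ν => by positivity) hsummable]
      exact ENNReal.ofReal_ne_top
    exact ENNReal.mul_lt_top hTtop.lt_top hsum.lt_top
  · intro j hj ρ hρ0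
    have hjR : (1:ℝ) ≤ (j:ℝ) := by exact_mod_cast hj
    have harith : 2 * (1 + 1 / (j : ℝ)) * (1 - 1 / ((j : ℝ) + 1)) = 2 := by
      have hj0 : (j:ℝ) ≠ 0 := by linarith
      have hj1 : (j:ℝ) + 1 ≠ 0 := by linarith
      field_simp
      ring
    refine eq_top_iff.2 ?_
    calc (⊤ : ℝ≥0∞) = ∫⁻ z in ball (0:ℂ) ρ, ((((j : ℝ≥0∞) + 1) ^ 4)⁻¹ *
          ((‖z‖₊ : ℝ≥0∞) ^ (2 * (1 + 1 / (j : ℝ)) * (1 - 1 / ((j : ℝ) + 1))))⁻¹) := by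
          rw [harith, lintegral_const_mul _ (hmz 2), key17, oneD_top17 hρ0]
          rw [ENNReal.mul_top hT0, ENNReal.mul_top]
          simp [ENNReal.pow_ne_top, ENNReal.add_ne_top]
      _ ≤ _ := lintegral_mono fun z => ENNReal.le_tsum j
end
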